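/- The 2-dimensional EACPs C₁ (with h·r = h) and C₂ (with h·r = (1/2)(h + r)) are not isomorphic as K-algebras: there is no linear bijection φ : K² → K² with φ(x ·₁ y) = φ(x) ·₂ φ(y) for all x,y, where ·₁ and ·₂ denote the multiplications of C₁ and C₂. (Indeed (C₁²)·(C₁²) = 0 while (C₂²)·(C₂²) ≠ 0.) -/

import Mathlib

/-- Multiplication of the 2-dimensional EACP `C(a,b)` on `K × K` with natural basis
`h = (1,0)`, `r = (0,1)`: `h·r = r·h = (1/2)(a•h + b•r)`, `h·h = r·r = 0`. -/
def eacpMul2 {K : Type*} [Field K] (a b : K) (p q : K × K) : K × K :=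
  ((1 / 2 : K) * (q.2 * p.1 + p.2 * q.1) * a, (1 / 2 : K) * (q.2 * p.1 + p.2 * q.1) * b)

/-- Two bilinear multiplications on `K × K` give isomorphic algebras if some linear
bijection intertwines them. -/
def IsAlgIso2 {K : Type*} [Field K] (m₁ m₂ : K × K → K × K → K × K) : Prop :=
  ∃ φ : (K × K) ≃ₗ[K] (K × K), ∀ x y, φ (m₁ x y) = m₂ (φ x) (φ y)

theorem eacp2_C1_not_iso_C2 {K : Type*} [Field K] (h2 : (2 : K) ≠ 0) :
    ¬ IsAlgIso2 (eacpMul2 (2 : K) (0 : K)) (eacpMul2 (1 : K) (1 : K)) := by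
  rintro ⟨φ, hφ⟩
  set u := φ.symm ((1 : K), (0 : K)) with hu
  set v := φ.symm ((0 : K), (1 : K)) with hv
  have h1 : φ (eacpMul2 2 0 (eacpMul2 2 0 u v) (eacpMul2 2 0 u v))
      = eacpMul2 1 1 (eacpMul2 1 1 ((1 : K), (0 : K)) ((0 : K), (1 : K)))
          (eacpMul2 1 1 ((1 : K), (0 : K)) ((0 : K), (1 : K))) := by
    rw [hφ, hφ, hu, hv, φ.apply_symm_apply, φ.apply_symm_apply]
  have h0 : eacpMul2 (2 : K) 0 (eacpMul2 2 0 u v) (eacpMul2 2 0 u v) = 0 := by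
    simp [eacpMul2, Prod.ext_iff]
  rw [h0, map_zero] at h1
  have hfst := congrArg Prod.fst h1
  simp [eacpMul2] at hfst
  have : ((0 : K), (0 : K)).1 = ((1 : K) / 2 * ((1 / 2 * (1 * 1 + 0 * 0) * 1) *
      (1 / 2 * (1 * 1 + 0 * 0) * 1) + (1 / 2 * (1 * 1 + 0 * 0) * 1) *
      (1 / 2 * (1 * 1 + 0 * 0) * 1)) * 1) := by
    exact congrArg Prod.fst h1
  field_simp at this
  exact h2 (by rw [(by norm_num : (2:K) = 1 + 1)]; linear_combination this.symm)
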